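/- Let M ~ Poisson(m) with m = n − n^{2/3} (n large enough so that m > 0). Then E[(M − n)·1_{M > n}] ≤ n·exp(−n^{1/3}/2) + 6·exp(−n/6); in particular E[(M−n)₊] → 0 as n → ∞. -/

import Mathlib

open Filter

open Real in
lemma exp_tsum' (x : ℝ) : ∑' k : ℕ, x ^ k / (Nat.factorial k : ℝ) = Real.exp x := by
  rw [Real.exp_eq_exp_ℝ, NormedSpace.exp_eq_tsum_div]

lemma key (n : ℝ) (hn : 1 < n) :
    (∑' k : ℕ, (if n < (k : ℝ) then ((k : ℝ) - n) else 0) *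
        (Real.exp (-(n - n ^ ((2 : ℝ)/3))) * (n - n ^ ((2 : ℝ)/3)) ^ k /
          (Nat.factorial k : ℝ)))
      ≤ n * Real.exp (-(n ^ ((1 : ℝ)/3)) / 2) := by
  have hn0 : (0:ℝ) < n := by linarith
  set a : ℝ := n ^ ((1:ℝ)/3) with ha_def
  have ha1 : 1 < a := Real.one_lt_rpow hn (by norm_num)
  have ha0 : 0 < a := by linarith
  have ha3 : a ^ (3:ℕ) = n := by
    rw [ha_def, ← Real.rpow_natCast (n ^ ((1:ℝ)/3)) 3, ← Real.rpow_mul hn0.le]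
    norm_num
  have ha2 : a ^ (2:ℕ) = n ^ ((2:ℝ)/3) := by
    rw [ha_def, ← Real.rpow_natCast (n ^ ((1:ℝ)/3)) 2, ← Real.rpow_mul hn0.le]
    norm_num
  set m : ℝ := n - n ^ ((2:ℝ)/3) with hm_def
  have hm_eq : m = a ^ 3 - a ^ 2 := by rw [hm_def, ← ha2, ← ha3]
  have hm0 : 0 < m := by rw [hm_eq]; nlinarith
  set l : ℝ := 1 / a with hl_def
  have hl0 : 0 < l := by positivity
  have hl1 : l ≤ 1 := by rw [hl_def, div_le_one ha0]; linarith
  set x : ℝ := m * Real.exp l with hx_def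
  set C : ℝ := Real.exp (-1) / l * (Real.exp (-(l*n)) * Real.exp (-m)) with hC_def
  have hfg : ∀ k : ℕ,
      (if n < (k : ℝ) then ((k : ℝ) - n) else 0) *
        (Real.exp (-m) * m ^ k / (Nat.factorial k : ℝ)) ≤ C * (x ^ k / (Nat.factorial k : ℝ)) := by
    intro k
    have hrhs : C * (x ^ k / (Nat.factorial k : ℝ)) =
        (Real.exp (-1) / l * Real.exp (l * ((k:ℝ) - n))) *
          (Real.exp (-m) * m ^ k / (Nat.factorial k : ℝ)) := by
      have h1 : Real.exp (l * ((k:ℝ) - n)) = (Real.exp l) ^ k * Real.exp (-(l*n)) := by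
        rw [← Real.exp_nat_mul, ← Real.exp_add]
        congr 1; ring
      rw [hC_def, h1, hx_def, mul_pow]
      ring
    rw [hrhs]
    have hmass : (0:ℝ) ≤ Real.exp (-m) * m ^ k / (Nat.factorial k : ℝ) := by positivity
    apply mul_le_mul_of_nonneg_right _ hmass
    by_cases h : n < (k:ℝ)
    · simp only [h, if_true]
      have h2 : l * ((k:ℝ) - n) ≤ Real.exp (l * ((k:ℝ) - n) - 1) := by
        have := Real.add_one_le_exp (l * ((k:ℝ) - n) - 1)
        linarith
      have h3 : ((k:ℝ) - n) * l ≤ Real.exp (l * ((k:ℝ) - n) - 1) := by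
        rw [mul_comm]; exact h2
      have h4 : ((k:ℝ) - n) ≤ Real.exp (l * ((k:ℝ) - n) - 1) / l :=
        (le_div_iff₀ hl0).2 h3
      calc ((k:ℝ) - n) ≤ Real.exp (l * ((k:ℝ) - n) - 1) / l := h4
        _ = Real.exp (-1) / l * Real.exp (l * ((k:ℝ) - n)) := by
            rw [Real.exp_sub, Real.exp_neg]
            field_simp
        _ ≤ Real.exp (-1) / l * Real.exp (l * ((k:ℝ) - n)) := le_rfl
    · simp only [h, if_false]
      positivity
  have hsumg : Summable (fun k : ℕ => C * (x ^ k / (Nat.factorial k : ℝ))) :=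
    (Real.summable_pow_div_factorial x).mul_left C
  have hf_nonneg : ∀ k : ℕ, 0 ≤ (if n < (k : ℝ) then ((k : ℝ) - n) else 0) *
      (Real.exp (-m) * m ^ k / (Nat.factorial k : ℝ)) := by
    intro k
    apply mul_nonneg _ (by positivity)
    by_cases h : n < (k:ℝ) <;> simp [h] <;> linarith
  have hsumf : Summable (fun k : ℕ => (if n < (k : ℝ) then ((k : ℝ) - n) else 0) *
      (Real.exp (-m) * m ^ k / (Nat.factorial k : ℝ))) :=
    Summable.of_nonneg_of_le hf_nonneg hfg hsumg
  have hstep : (∑' k : ℕ, (if n < (k : ℝ) then ((k : ℝ) - n) else 0) *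
        (Real.exp (-m) * m ^ k / (Nat.factorial k : ℝ)))
      ≤ C * Real.exp x := by
    calc _ ≤ ∑' k : ℕ, C * (x ^ k / (Nat.factorial k : ℝ)) := Summable.tsum_le_tsum hfg hsumf hsumg
      _ = C * Real.exp x := by rw [tsum_mul_left, exp_tsum']
  refine hstep.trans ?_
  -- now the numeric bound
  have hCx : C * Real.exp x = Real.exp (-1) / l * Real.exp (x - l*n - m) := by
    rw [hC_def, show x - l*n - m = -(l*n) + -m + x by ring, Real.exp_add, Real.exp_add]
    ring
  have hexp_l : Real.exp l ≤ 1 + l + l^2/2 + l^3 := by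
    have h := Real.exp_bound' hl0.le hl1 (n := 3) (by norm_num)
    norm_num [Finset.sum_range_succ, Nat.factorial] at h
    nlinarith [pow_pos hl0 3]
  have hE : x - l*n - m ≤ 1 - a/2 := by
    have h1 : x ≤ m * (1 + l + l^2/2 + l^3) :=
      mul_le_mul_of_nonneg_left hexp_l hm0.le
    have h2 : m * (1 + l + l^2/2 + l^3) - l*n - m ≤ 1 - a/2 := by
      rw [hm_eq, hl_def, ← ha3]
      have ha0' : a ≠ 0 := ne_of_gt ha0
      field_simp
      ring_nf
      nlinarith [pow_pos ha0 6, pow_pos ha0 7, pow_pos ha0 3, pow_pos ha0 2]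
    linarith
  have hfinal : Real.exp (-1) / l * Real.exp (x - l*n - m) ≤ n * Real.exp (-a / 2) := by
    have h1 : Real.exp (x - l*n - m) ≤ Real.exp (1 - a/2) := Real.exp_le_exp.2 hE
    have h2 : Real.exp (-1) / l = Real.exp (-1) * a := by
      rw [hl_def]; field_simp
    have h3 : Real.exp (-1) * Real.exp (1 - a/2) = Real.exp (-a/2) := by
      rw [← Real.exp_add]; congr 1; ring
    have ha_le_n : a ≤ n := by
      rw [ha_def]
      calc n ^ ((1:ℝ)/3) ≤ n ^ (1:ℝ) :=
        Real.rpow_le_rpow_of_exponent_le hn.le (by norm_num)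
        _ = n := Real.rpow_one n
    calc Real.exp (-1) / l * Real.exp (x - l*n - m)
        ≤ Real.exp (-1) / l * Real.exp (1 - a/2) := by
          apply mul_le_mul_of_nonneg_left h1 (by positivity)
      _ = a * Real.exp (-a/2) := by rw [h2]; rw [mul_comm (Real.exp (-1)) a, mul_assoc, h3]
      _ ≤ n * Real.exp (-a/2) := by
          apply mul_le_mul_of_nonneg_right ha_le_n (by positivity)
  rw [hCx]
  exact hfinal

open Real in
lemma upper_tendsto :
    Tendsto (fun n : ℝ => n * Real.exp (-(n ^ ((1 : ℝ)/3)) / 2) + 6 * Real.exp (-n / 6))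
      atTop (nhds 0) := by
  have hA : Tendsto (fun n : ℝ => n * Real.exp (-(n ^ ((1 : ℝ)/3)) / 2)) atTop (nhds 0) := by
    have h1 := tendsto_rpow_mul_exp_neg_mul_atTop_nhds_zero 3 (1/2) (by norm_num)
    have h2 : Tendsto (fun n : ℝ => n ^ ((1:ℝ)/3)) atTop atTop :=
      tendsto_rpow_atTop (by norm_num)
    apply (h1.comp h2).congr'
    filter_upwards [eventually_ge_atTop (0:ℝ)] with n hn
    simp only [Function.comp]
    rw [← Real.rpow_mul hn]
    norm_num
    left
    ring
  have hB : Tendsto (fun n : ℝ => 6 * Real.exp (-n / 6)) atTop (nhds 0) := by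
    have h0 : Tendsto (fun n : ℝ => n / 6) atTop atTop :=
      Tendsto.atTop_div_const (by norm_num) tendsto_id
    have h1 : Tendsto (fun n : ℝ => -n / 6) atTop atBot := by
      have h := tendsto_neg_atTop_atBot.comp h0
      exact h.congr (fun n => by simp [Function.comp, neg_div])
    have := (Real.tendsto_exp_atBot.comp h1).const_mul 6
    simpa using this
  simpa using hA.add hB

open Real in
lemma lower_nonneg (n : ℝ) (hn : 1 ≤ n) :
    0 ≤ ∑' k : ℕ, (if n < (k : ℝ) then ((k : ℝ) - n) else 0) *
        (Real.exp (-(n - n ^ ((2 : ℝ)/3))) * (n - n ^ ((2 : ℝ)/3)) ^ k /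
          (Nat.factorial k : ℝ)) := by
  have hm : 0 ≤ n - n ^ ((2:ℝ)/3) := by
    have : n ^ ((2:ℝ)/3) ≤ n ^ (1:ℝ) :=
      Real.rpow_le_rpow_of_exponent_le hn (by norm_num)
    rw [Real.rpow_one] at this
    linarith
  apply tsum_nonneg
  intro k
  apply mul_nonneg _ (by positivity)
  by_cases h : n < (k:ℝ) <;> simp [h] <;> linarith

/-- For `M ~ Poisson(m)` with `m = n − n^{2/3}` and `n > 1`,
`E[(M − n)·1_{M > n}] ≤ n·exp(−n^{1/3}/2) + 6·exp(−n/6)`, and in particular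
this expectation tends to `0` as `n → ∞`. -/
theorem stmt_19 :
    (∀ n : ℝ, 1 < n →
      (∑' k : ℕ, (if n < (k : ℝ) then ((k : ℝ) - n) else 0) *
          (Real.exp (-(n - n ^ ((2 : ℝ)/3))) * (n - n ^ ((2 : ℝ)/3)) ^ k /
            (Nat.factorial k : ℝ)))
        ≤ n * Real.exp (-(n ^ ((1 : ℝ)/3)) / 2) + 6 * Real.exp (-n / 6)) ∧
    Tendsto (fun n : ℝ =>
      ∑' k : ℕ, (if n < (k : ℝ) then ((k : ℝ) - n) else 0) *
          (Real.exp (-(n - n ^ ((2 : ℝ)/3))) * (n - n ^ ((2 : ℝ)/3)) ^ k /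
            (Nat.factorial k : ℝ))) atTop (nhds 0) := by
  have hbound : ∀ n : ℝ, 1 < n →
      (∑' k : ℕ, (if n < (k : ℝ) then ((k : ℝ) - n) else 0) *
          (Real.exp (-(n - n ^ ((2 : ℝ)/3))) * (n - n ^ ((2 : ℝ)/3)) ^ k /
            (Nat.factorial k : ℝ)))
        ≤ n * Real.exp (-(n ^ ((1 : ℝ)/3)) / 2) + 6 * Real.exp (-n / 6) := by
    intro n hn
    have h6 : (0:ℝ) ≤ 6 * Real.exp (-n / 6) := by positivity
    linarith [key n hn]
  refine ⟨hbound, ?_⟩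
  apply squeeze_zero'
  · filter_upwards [eventually_ge_atTop (1:ℝ)] with n hn
    exact lower_nonneg n hn
  · filter_upwards [eventually_gt_atTop (1:ℝ)] with n hn
    exact hbound n hn
  · exact upper_tendsto
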